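/- In misère Partizan Kayles, S₂ is strictly greater than S₁ + S₁ modulo the Kayles universe: for all Kayles positions X, o⁻(S₂ + X) ≥ o⁻(2S₁ + X) in the outcome order, and there exists X (namely X = 0, the empty position) with o⁻(S₂ + X) ≠ o⁻(2S₁ + X). -/
import Mathlib


/-- Add a strip of length `k` to a position (strips of length 0 are discarded). -/
def addStrip (m : Multiset ℕ) (k : ℕ) : Multiset ℕ := if k = 0 then m else k ::ₘ m

/-- Left removes one square from a strip of length `n ≥ 1`, leaving strips `i` and `n-1-i`. -/
def LeftMove (G G' : Multiset ℕ) : Prop :=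
  ∃ n ∈ G, ∃ i, i + 1 ≤ n ∧ G' = addStrip (addStrip (G.erase n) i) (n - 1 - i)

/-- Right removes two adjacent squares from a strip of length `n ≥ 2`, leaving `i` and `n-2-i`. -/
def RightMove (G G' : Multiset ℕ) : Prop :=
  ∃ n ∈ G, ∃ i, i + 2 ≤ n ∧ G' = addStrip (addStrip (G.erase n) i) (n - 2 - i)

mutual
  /-- Misère play: Left, to move, wins (a player unable to move wins). -/
  inductive LeftWinsMover : Multiset ℕ → Prop
    | cannot (G : Multiset ℕ) : (¬ ∃ G', LeftMove G G') → LeftWinsMover G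
    | move (G G' : Multiset ℕ) : LeftMove G G' → LeftWinsWaiter G' → LeftWinsMover G
  /-- Misère play: Left wins with Right to move. -/
  inductive LeftWinsWaiter : Multiset ℕ → Prop
    | intro (G : Multiset ℕ) : (∃ G', RightMove G G') →
        (∀ G', RightMove G G' → LeftWinsMover G') → LeftWinsWaiter G
end

inductive Outcome | L | N | P | R
  deriving DecidableEq

open Classical in
/-- The misère outcome `o⁻(G)`. -/
noncomputable def outcome (G : Multiset ℕ) : Outcome :=
  if LeftWinsMover G then (if LeftWinsWaiter G then Outcome.L else Outcome.N)
  else (if LeftWinsWaiter G then Outcome.P else Outcome.R)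

/-- The partial order on outcomes: `L` greatest, `R` least, `N` and `P` incomparable. -/
def Outcome.le (a b : Outcome) : Prop := a = b ∨ a = Outcome.R ∨ b = Outcome.L

/-- `pos k j` is the position `kS₁ + jS₂`. -/
def pos (k j : ℕ) : Multiset ℕ := Multiset.replicate k 1 + Multiset.replicate j 2

/-! ### Auxiliary machinery: the outcome formula for misère Partizan Kayles -/

/-- number of strips `≡ 1 (mod 3)` -/
def dd (G : Multiset ℕ) : ℕ := Multiset.countP (fun x => x % 3 = 1) G

/-- number of strips `≡ 2 (mod 3)` -/
def ee (G : Multiset ℕ) : ℕ := Multiset.countP (fun x => x % 3 = 2) G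

def PM (G : Multiset ℕ) : Prop := dd G ≤ ee G ∧ (ee G - dd G) % 3 = 0
def PW (G : Multiset ℕ) : Prop := dd G ≤ ee G ∧ (ee G - dd G) % 3 = 1

lemma dd_cons (a : ℕ) (s : Multiset ℕ) :
    dd (a ::ₘ s) = dd s + (if a % 3 = 1 then 1 else 0) :=
  Multiset.countP_cons _ _ _

lemma ee_cons (a : ℕ) (s : Multiset ℕ) :
    ee (a ::ₘ s) = ee s + (if a % 3 = 2 then 1 else 0) :=
  Multiset.countP_cons _ _ _

lemma dd_addStrip (m : Multiset ℕ) (k : ℕ) :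
    dd (addStrip m k) = dd m + (if k % 3 = 1 then 1 else 0) := by
  by_cases hk : k = 0
  · subst hk; simp [addStrip]
  · simp only [addStrip, if_neg hk, dd_cons]

lemma ee_addStrip (m : Multiset ℕ) (k : ℕ) :
    ee (addStrip m k) = ee m + (if k % 3 = 2 then 1 else 0) := by
  by_cases hk : k = 0
  · subst hk; simp [addStrip]
  · simp only [addStrip, if_neg hk, ee_cons]

lemma sum_addStrip (m : Multiset ℕ) (k : ℕ) : (addStrip m k).sum = m.sum + k := by
  by_cases hk : k = 0
  · subst hk; simp [addStrip]
  · simp only [addStrip, if_neg hk, Multiset.sum_cons]; omega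

lemma dd_erase {G : Multiset ℕ} {n : ℕ} (hn : n ∈ G) :
    dd G = dd (G.erase n) + (if n % 3 = 1 then 1 else 0) := by
  conv_lhs => rw [← Multiset.cons_erase hn]
  rw [dd_cons]

lemma ee_erase {G : Multiset ℕ} {n : ℕ} (hn : n ∈ G) :
    ee G = ee (G.erase n) + (if n % 3 = 2 then 1 else 0) := by
  conv_lhs => rw [← Multiset.cons_erase hn]
  rw [ee_cons]

lemma sum_erase' {G : Multiset ℕ} {n : ℕ} (hn : n ∈ G) :
    G.sum = (G.erase n).sum + n := by
  conv_lhs => rw [← Multiset.cons_erase hn]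
  rw [Multiset.sum_cons]; omega

/-- data about an arbitrary Left move -/
lemma left_data {G G' : Multiset ℕ} (h : LeftMove G G') :
    ∃ n i j : ℕ, n ∈ G ∧ i + j + 1 = n ∧ G'.sum + 1 = G.sum ∧
      dd G' + (if n % 3 = 1 then 1 else 0)
        = dd G + (if i % 3 = 1 then 1 else 0) + (if j % 3 = 1 then 1 else 0) ∧
      ee G' + (if n % 3 = 2 then 1 else 0)
        = ee G + (if i % 3 = 2 then 1 else 0) + (if j % 3 = 2 then 1 else 0) := by
  obtain ⟨n, hn, i, hi, rfl⟩ := h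
  refine ⟨n, i, n - 1 - i, hn, by omega, ?_, ?_, ?_⟩
  · rw [sum_addStrip, sum_addStrip, sum_erase' hn]; omega
  · rw [dd_addStrip, dd_addStrip, dd_erase hn]; split_ifs <;> omega
  · rw [ee_addStrip, ee_addStrip, ee_erase hn]; split_ifs <;> omega

/-- data about an arbitrary Right move -/
lemma right_data {G G' : Multiset ℕ} (h : RightMove G G') :
    ∃ n i j : ℕ, n ∈ G ∧ i + j + 2 = n ∧ G'.sum + 2 = G.sum ∧
      dd G' + (if n % 3 = 1 then 1 else 0)
        = dd G + (if i % 3 = 1 then 1 else 0) + (if j % 3 = 1 then 1 else 0) ∧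
      ee G' + (if n % 3 = 2 then 1 else 0)
        = ee G + (if i % 3 = 2 then 1 else 0) + (if j % 3 = 2 then 1 else 0) := by
  obtain ⟨n, hn, i, hi, rfl⟩ := h
  refine ⟨n, i, n - 2 - i, hn, by omega, ?_, ?_, ?_⟩
  · rw [sum_addStrip, sum_addStrip, sum_erase' hn]; omega
  · rw [dd_addStrip, dd_addStrip, dd_erase hn]; split_ifs <;> omega
  · rw [ee_addStrip, ee_addStrip, ee_erase hn]; split_ifs <;> omega

/-- construct a Left move on strip `n`, splitting off `i` -/
lemma mk_left {G : Multiset ℕ} {n : ℕ} (hn : n ∈ G) (i : ℕ) (hi : i + 1 ≤ n) :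
    ∃ G', LeftMove G G' ∧ G'.sum + 1 = G.sum ∧
      dd G' + (if n % 3 = 1 then 1 else 0)
        = dd G + (if i % 3 = 1 then 1 else 0) + (if (n - 1 - i) % 3 = 1 then 1 else 0) ∧
      ee G' + (if n % 3 = 2 then 1 else 0)
        = ee G + (if i % 3 = 2 then 1 else 0) + (if (n - 1 - i) % 3 = 2 then 1 else 0) := by
  refine ⟨_, ⟨n, hn, i, hi, rfl⟩, ?_, ?_, ?_⟩
  · rw [sum_addStrip, sum_addStrip, sum_erase' hn]; omega
  · rw [dd_addStrip, dd_addStrip, dd_erase hn]; split_ifs <;> omega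
  · rw [ee_addStrip, ee_addStrip, ee_erase hn]; split_ifs <;> omega

/-- construct a Right move on strip `n`, splitting off `i` -/
lemma mk_right {G : Multiset ℕ} {n : ℕ} (hn : n ∈ G) (i : ℕ) (hi : i + 2 ≤ n) :
    ∃ G', RightMove G G' ∧ G'.sum + 2 = G.sum ∧
      dd G' + (if n % 3 = 1 then 1 else 0)
        = dd G + (if i % 3 = 1 then 1 else 0) + (if (n - 2 - i) % 3 = 1 then 1 else 0) ∧
      ee G' + (if n % 3 = 2 then 1 else 0)
        = ee G + (if i % 3 = 2 then 1 else 0) + (if (n - 2 - i) % 3 = 2 then 1 else 0) := by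
  refine ⟨_, ⟨n, hn, i, hi, rfl⟩, ?_, ?_, ?_⟩
  · rw [sum_addStrip, sum_addStrip, sum_erase' hn]; omega
  · rw [dd_addStrip, dd_addStrip, dd_erase hn]; split_ifs <;> omega
  · rw [ee_addStrip, ee_addStrip, ee_erase hn]; split_ifs <;> omega

lemma dd_pos {G : Multiset ℕ} : 0 < dd G ↔ ∃ a ∈ G, a % 3 = 1 :=
  Multiset.countP_pos

lemma ee_pos {G : Multiset ℕ} : 0 < ee G ↔ ∃ a ∈ G, a % 3 = 2 :=
  Multiset.countP_pos

/-- The outcome formula for misère Partizan Kayles. -/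
theorem main (G : Multiset ℕ) :
    (LeftWinsMover G ↔ PM G) ∧ (LeftWinsWaiter G ↔ PW G) := by
  suffices key : ∀ N (G : Multiset ℕ), G.sum < N →
      ((LeftWinsMover G ↔ PM G) ∧ (LeftWinsWaiter G ↔ PW G)) from
    key (G.sum + 1) G (by omega)
  intro N
  induction N with
  | zero => intro G h; omega
  | succ N ih =>
    intro G hG
    constructor
    · constructor
      · intro h
        cases h with
        | cannot _ hno =>
          have hd : dd G = 0 := by
            rw [dd, Multiset.countP_eq_zero]
            intro a ha hp
            exact hno ⟨_, a, ha, 0, by omega, rfl⟩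
          have he : ee G = 0 := by
            rw [ee, Multiset.countP_eq_zero]
            intro a ha hp
            exact hno ⟨_, a, ha, 0, by omega, rfl⟩
          exact ⟨by omega, by omega⟩
        | move _ G' hmv hW =>
          obtain ⟨n, i, j, hn, hij, hs, hdd, hee⟩ := left_data hmv
          have hPW : PW G' := ((ih G' (by omega)).2).mp hW
          unfold PW at hPW; unfold PM
          split_ifs at hdd hee <;> omega
      · intro hPM
        by_cases hex : ∃ G', LeftMove G G'
        · unfold PM at hPM
          by_cases hd : 0 < dd G
          · obtain ⟨n, hn, hp⟩ := dd_pos.mp hd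
            obtain ⟨G', hmv, hs, hdd, hee⟩ := mk_left hn 0 (by omega)
            refine LeftWinsMover.move G G' hmv (((ih G' (by omega)).2).mpr ?_)
            unfold PW
            split_ifs at hdd hee <;> omega
          · by_cases he : 0 < ee G
            · obtain ⟨n, hn, hp⟩ := ee_pos.mp he
              obtain ⟨G', hmv, hs, hdd, hee⟩ := mk_left hn 0 (by omega)
              refine LeftWinsMover.move G G' hmv (((ih G' (by omega)).2).mpr ?_)
              unfold PW
              split_ifs at hdd hee <;> omega
            · obtain ⟨G0, n, hn, i, hi, hG0⟩ := hex
              have h1 : ¬ (n % 3 = 1) := fun h => hd (dd_pos.mpr ⟨n, hn, h⟩)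
              have h2 : ¬ (n % 3 = 2) := fun h => he (ee_pos.mpr ⟨n, hn, h⟩)
              obtain ⟨G', hmv, hs, hdd, hee⟩ := mk_left hn 0 (by omega)
              refine LeftWinsMover.move G G' hmv (((ih G' (by omega)).2).mpr ?_)
              unfold PW
              split_ifs at hdd hee <;> omega
        · exact LeftWinsMover.cannot G hex
    · constructor
      · intro h
        cases h with
        | intro _ hex hall =>
          have hAll : ∀ G', RightMove G G' → PM G' := by
            intro G' hmv
            obtain ⟨n, i, j, hn, hij, hs, hdd, hee⟩ := right_data hmv
            exact ((ih G' (by omega)).1).mp (hall G' hmv)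
          obtain ⟨G0, n0, hn0, i0, hi0, hG0⟩ := hex
          by_cases he : 0 < ee G
          · obtain ⟨n, hn, hp⟩ := ee_pos.mp he
            obtain ⟨G', hmv, hs, hdd, hee⟩ := mk_right hn 0 (by omega)
            have hPM := hAll G' hmv
            unfold PM at hPM; unfold PW
            split_ifs at hdd hee <;> omega
          · exfalso
            have h2 : ¬ (n0 % 3 = 2) := fun h => he (ee_pos.mpr ⟨n0, hn0, h⟩)
            have heG : ee G = 0 := by omega
            by_cases h1 : n0 % 3 = 1
            · obtain ⟨G', hmv, hs, hdd, hee⟩ := mk_right hn0 1 (by omega)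
              have hPM := hAll G' hmv
              unfold PM at hPM
              split_ifs at hdd hee <;> omega
            · obtain ⟨G', hmv, hs, hdd, hee⟩ := mk_right hn0 0 (by omega)
              have hPM := hAll G' hmv
              unfold PM at hPM
              split_ifs at hdd hee <;> omega
      · intro hPW
        unfold PW at hPW
        have he : 0 < ee G := by omega
        obtain ⟨n, hn, hp⟩ := ee_pos.mp he
        refine LeftWinsWaiter.intro G ⟨_, n, hn, 0, by omega, rfl⟩ ?_
        intro G' hmv
        obtain ⟨m, i, j, hm, hij, hs, hdd, hee⟩ := right_data hmv
        refine ((ih G' (by omega)).1).mpr ?_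
        unfold PM
        split_ifs at hdd hee <;> omega

theorem kayles_S2_gt_2S1 :
    (∀ X : Multiset ℕ, 0 ∉ X →
      Outcome.le (outcome (1 ::ₘ 1 ::ₘ X)) (outcome (2 ::ₘ X))) ∧
    outcome (pos 0 1) ≠ outcome (pos 2 0) := by
  constructor
  · intro X _
    obtain ⟨hm1, hw1⟩ := main (1 ::ₘ 1 ::ₘ X)
    obtain ⟨hm2, hw2⟩ := main (2 ::ₘ X)
    have e1 : dd (1 ::ₘ 1 ::ₘ X) = dd X + 2 := by
      rw [dd_cons, dd_cons]; norm_num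
    have e2 : ee (1 ::ₘ 1 ::ₘ X) = ee X := by
      rw [ee_cons, ee_cons]; norm_num
    have e3 : dd (2 ::ₘ X) = dd X := by
      rw [dd_cons]; norm_num
    have e4 : ee (2 ::ₘ X) = ee X + 1 := by
      rw [ee_cons]; norm_num
    have key : (¬ LeftWinsMover (1 ::ₘ 1 ::ₘ X) ∧ ¬ LeftWinsWaiter (1 ::ₘ 1 ::ₘ X)) ∨
        ((LeftWinsMover (1 ::ₘ 1 ::ₘ X) ↔ LeftWinsMover (2 ::ₘ X)) ∧
         (LeftWinsWaiter (1 ::ₘ 1 ::ₘ X) ↔ LeftWinsWaiter (2 ::ₘ X))) := by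
      rw [hm1, hw1, hm2, hw2]
      unfold PM PW
      rw [e1, e2, e3, e4]
      omega
    rcases key with ⟨h1, h2⟩ | ⟨h1, h2⟩
    · simp only [outcome, if_neg h1, if_neg h2]
      exact Or.inr (Or.inl rfl)
    · simp only [outcome]
      rw [h1, h2]
      exact Or.inl rfl
  · have ep1 : pos 0 1 = 2 ::ₘ 0 := by
      simp [pos, Multiset.replicate_succ]
    have ep2 : pos 2 0 = 1 ::ₘ 1 ::ₘ 0 := by
      simp [pos, Multiset.replicate_succ]
    have c1 : dd (pos 0 1) = 0 := by
      rw [ep1, dd_cons]; simp [dd]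
    have c2 : ee (pos 0 1) = 1 := by
      rw [ep1, ee_cons]; simp [ee]
    have c3 : dd (pos 2 0) = 2 := by
      rw [ep2, dd_cons, dd_cons]; simp [dd]
    have c4 : ee (pos 2 0) = 0 := by
      rw [ep2, ee_cons, ee_cons]; simp [ee]
    have o1 : outcome (pos 0 1) = Outcome.P := by
      have hnm : ¬ LeftWinsMover (pos 0 1) := by
        rw [(main _).1]; unfold PM; omega
      have hw : LeftWinsWaiter (pos 0 1) := by
        rw [(main _).2]; unfold PW; omega
      simp only [outcome, if_neg hnm, if_pos hw]
    have o2 : outcome (pos 2 0) = Outcome.R := by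
      have hnm : ¬ LeftWinsMover (pos 2 0) := by
        rw [(main _).1]; unfold PM; omega
      have hnw : ¬ LeftWinsWaiter (pos 2 0) := by
        rw [(main _).2]; unfold PW; omega
      simp only [outcome, if_neg hnm, if_neg hnw]
    rw [o1, o2]
    simp
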